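/- Let p be a prime and k ≥ 1 an integer. For every finite set A ⊆ ℚ_p with |A| ≥ 2p^{k−1} there exist α ∈ ℚ_p and pairwise distinct elements a₁, …, a_k ∈ A such that α ≠ a_i for every i and the valuations v(α − a₁), …, v(α − a_k) are pairwise distinct, where v is the p-adic valuation. -/

import Mathlib

variable {p : ℕ} [Fact p.Prime]

private lemma pdv_val_neg (x : ℚ_[p]) : (-x).valuation = x.valuation := by
  by_cases hx : x = 0
  · simp [hx]
  have h1 : ‖(-x)‖ = ‖x‖ := norm_neg x
  rw [Padic.norm_eq_zpow_neg_valuation (neg_ne_zero.mpr hx), Padic.norm_eq_zpow_neg_valuation hx] at h1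
  have h1p : 1 < (p : ℝ) := by exact_mod_cast (Fact.out : p.Prime).one_lt
  have := (zpow_right_strictMono₀ h1p).injective h1
  omega

private lemma pdv_norm_le_iff (x : ℚ_[p]) (hx : x ≠ 0) (n : ℤ) :
    ‖x‖ ≤ (p : ℝ) ^ (-n) ↔ n ≤ x.valuation := by
  rw [Padic.norm_eq_zpow_neg_valuation hx]
  have h1p : 1 < (p : ℝ) := by exact_mod_cast (Fact.out : p.Prime).one_lt
  rw [(zpow_right_strictMono₀ h1p).le_iff_le]
  omega

private lemma pdv_aux (k : ℕ) (hk : 1 ≤ k) :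
    ∀ A : Finset ℚ_[p], 2 * p ^ (k - 1) ≤ A.card →
    ∃ α ∈ A, ∃ a : Fin k → ℚ_[p], (∀ i, a i ∈ A) ∧ Function.Injective a ∧
      (∀ i, α ≠ a i) ∧
      ∀ i j : Fin k, i ≠ j → (α - a i).valuation ≠ (α - a j).valuation := by
  classical
  induction k, hk using Nat.le_induction with
  | base =>
    intro A hA
    have hA' : 2 ≤ A.card := by simpa using hA
    obtain ⟨x, hx, y, hy, hxy⟩ := Finset.one_lt_card.mp (by omega : 1 < A.card)
    exact ⟨x, hx, fun _ => y, fun _ => hy, Function.injective_of_subsingleton _,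
      fun _ => hxy, fun i j hij => absurd (Subsingleton.elim i j) hij⟩
  | succ k hk IH =>
    intro A hA
    simp only [Nat.add_sub_cancel] at hA
    have hppos : 0 < p := (Fact.out : p.Prime).pos
    have hA2 : 2 ≤ A.card := by
      have : 1 ≤ p ^ k := Nat.one_le_pow _ _ hppos
      omega
    -- the minimal valuation of differences
    set S : Finset ℤ :=
      ((A ×ˢ A).filter (fun q => q.1 ≠ q.2)).image (fun q => (q.1 - q.2).valuation) with hS
    obtain ⟨x0, hx0, y0, hy0, hxy0⟩ := Finset.one_lt_card.mp (by omega : 1 < A.card)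
    have hSne : S.Nonempty :=
      ⟨_, Finset.mem_image.mpr ⟨(x0, y0), Finset.mem_filter.mpr
        ⟨Finset.mem_product.mpr ⟨hx0, hy0⟩, hxy0⟩, rfl⟩⟩
    set m : ℤ := S.min' hSne with hm
    have hm_min : ∀ x ∈ A, ∀ y ∈ A, x ≠ y → m ≤ (x - y).valuation := by
      intro x hx y hy hxy
      exact S.min'_le _ (Finset.mem_image.mpr ⟨(x, y), Finset.mem_filter.mpr
        ⟨Finset.mem_product.mpr ⟨hx, hy⟩, hxy⟩, rfl⟩)
    obtain ⟨⟨x1, y1⟩, hq, hq2⟩ := Finset.mem_image.mp (S.min'_mem hSne)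
    rw [Finset.mem_filter, Finset.mem_product] at hq
    obtain ⟨⟨hx1, hy1⟩, hxy1⟩ := hq
    -- residue map
    obtain ⟨a₀, ha₀⟩ : A.Nonempty := Finset.card_pos.mp (by omega)
    set g : ℚ_[p] → ℚ_[p] := fun a => (a - a₀) * (p : ℚ_[p]) ^ (-m) with hgdef
    have hp0 : (p : ℚ_[p]) ≠ 0 := by
      exact_mod_cast (Fact.out : p.Prime).ne_zero
    have hgnorm : ∀ a, ‖g a‖ = ‖a - a₀‖ * (p : ℝ) ^ m := by
      intro a
      rw [hgdef]
      simp only [norm_mul, Padic.norm_p_zpow, neg_neg]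
    have hg1 : ∀ a ∈ A, ‖g a‖ ≤ 1 := by
      intro a ha
      by_cases haa : a = a₀
      · simp [hgdef, haa]
      · rw [hgnorm]
        have h1 : ‖a - a₀‖ ≤ (p : ℝ) ^ (-m) :=
          (pdv_norm_le_iff _ (sub_ne_zero.mpr haa) m).mpr (hm_min a ha a₀ ha₀ haa)
        have h2 : (0 : ℝ) < (p : ℝ) ^ m := zpow_pos (by exact_mod_cast hppos) _
        calc ‖a - a₀‖ * (p : ℝ) ^ m ≤ (p : ℝ) ^ (-m) * (p : ℝ) ^ m := by
              exact mul_le_mul_of_nonneg_right h1 h2.le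
          _ = 1 := by
              rw [← zpow_add₀ (by exact_mod_cast hppos.ne' : (p:ℝ) ≠ 0)]
              simp
    set f : ℚ_[p] → ZMod p := fun a =>
      if h : ‖g a‖ ≤ 1 then PadicInt.toZMod (⟨g a, h⟩ : ℤ_[p]) else 0 with hf
    -- pigeonhole
    have hcard : (Finset.univ : Finset (ZMod p)).card * (2 * p ^ (k - 1)) ≤ A.card := by
      rw [Finset.card_univ, ZMod.card]
      have hk1 : k - 1 + 1 = k := by omega
      calc p * (2 * p ^ (k - 1)) = 2 * (p ^ (k - 1) * p) := by ring
        _ = 2 * p ^ k := by rw [← pow_succ, hk1]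
        _ ≤ A.card := hA
    obtain ⟨r, _, hr⟩ := Finset.exists_le_card_fiber_of_mul_le_card_of_maps_to
      (fun a _ => Finset.mem_univ (f a)) ⟨0, Finset.mem_univ 0⟩ hcard
    set B : Finset ℚ_[p] := A.filter (fun a => f a = r) with hB
    have hBsub : B ⊆ A := Finset.filter_subset _ _
    -- class property
    have hclass : ∀ x ∈ B, ∀ y ∈ B, x ≠ y → m + 1 ≤ (x - y).valuation := by
      intro x hx y hy hxy
      rw [hB, Finset.mem_filter] at hx hy
      obtain ⟨hxA, hxf⟩ := hx
      obtain ⟨hyA, hyf⟩ := hy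
      have hgx := hg1 x hxA
      have hgy := hg1 y hyA
      rw [hf] at hxf hyf
      simp only [dif_pos hgx] at hxf
      simp only [dif_pos hgy] at hyf
      have hker : (⟨g x, hgx⟩ - ⟨g y, hgy⟩ : ℤ_[p]) ∈ Ideal.span {(p : ℤ_[p]) ^ 1} := by
        rw [pow_one, ← PadicInt.maximalIdeal_eq_span_p, ← PadicInt.ker_toZMod,
          RingHom.mem_ker]
        erw [map_sub, hxf, hyf, sub_self]
      have hnorm : ‖(⟨g x, hgx⟩ - ⟨g y, hgy⟩ : ℤ_[p])‖ ≤ (p : ℝ) ^ (-(1:ℕ) : ℤ) :=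
        (PadicInt.norm_le_pow_iff_mem_span_pow _ 1).mpr hker
      have hsub : ((⟨g x, hgx⟩ - ⟨g y, hgy⟩ : ℤ_[p]) : ℚ_[p]) = (x - y) * (p : ℚ_[p]) ^ (-m) := by
        push_cast
        change g x - g y = _
        rw [hgdef]
        ring
      rw [PadicInt.norm_def, hsub] at hnorm
      rw [norm_mul, Padic.norm_p_zpow, neg_neg] at hnorm
      have hxy0 : x - y ≠ 0 := sub_ne_zero.mpr hxy
      rw [← pdv_norm_le_iff _ hxy0]
      have h2 : (0 : ℝ) < (p : ℝ) ^ (-m) := zpow_pos (by exact_mod_cast hppos) _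
      have hpR : (p : ℝ) ≠ 0 := by exact_mod_cast hppos.ne'
      have : ‖x - y‖ * (p : ℝ) ^ m * (p : ℝ) ^ (-m) ≤ (p : ℝ) ^ (-(1:ℤ)) * (p : ℝ) ^ (-m) := by
        apply mul_le_mul_of_nonneg_right _ h2.le
        exact_mod_cast hnorm
      rw [mul_assoc, ← zpow_add₀ hpR, ← zpow_add₀ hpR] at this
      simpa [add_neg_cancel, neg_add] using this
    -- apply IH to B
    obtain ⟨α, hαB, a, haB, hainj, hαa, hval⟩ := IH B hr
    have hαA : α ∈ A := hBsub hαB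
    have hsucc : ∀ i : Fin k, m + 1 ≤ (α - a i).valuation := fun i =>
      hclass α hαB (a i) (haB i) (hαa i)
    -- find the far element
    have hfar : ∃ c ∈ A, c ≠ α ∧ (α - c).valuation = m := by
      by_cases hαx : α = x1
      · refine ⟨y1, hy1, ?_, ?_⟩
        · intro h; rw [hαx] at h; exact hxy1 h.symm
        · rw [hαx]; exact hq2
      by_cases hαy : α = y1
      · refine ⟨x1, hx1, ?_, ?_⟩
        · intro h; rw [hαy] at h; exact hxy1 h
        · rw [hαy, ← pdv_val_neg, neg_sub]; exact hq2
      · have hαx0 : α - x1 ≠ 0 := sub_ne_zero.mpr hαx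
        have hαy0 : α - y1 ≠ 0 := sub_ne_zero.mpr hαy
        have hx1v : m ≤ (α - x1).valuation := hm_min α hαA x1 hx1 hαx
        have hy1v : m ≤ (α - y1).valuation := hm_min α hαA y1 hy1 hαy
        have key : (α - x1).valuation = m ∨ (α - y1).valuation = m := by
          by_contra hcon
          push_neg at hcon
          have h1 : m + 1 ≤ (α - x1).valuation := by
            rcases lt_or_eq_of_le hx1v with h | h
            · omega
            · exact absurd h.symm hcon.1
          have h2 : m + 1 ≤ (α - y1).valuation := by
            rcases lt_or_eq_of_le hy1v with h | h
            · omega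
            · exact absurd h.symm hcon.2
          have hadd : x1 - y1 = (α - y1) + -(α - x1) := by ring
          have hne : (α - y1) + -(α - x1) ≠ 0 := by
            rw [← hadd]; exact sub_ne_zero.mpr hxy1
          have := Padic.le_valuation_add hne
          rw [← hadd, pdv_val_neg] at this
          rw [hq2, ← hm] at this
          omega
        rcases key with h | h
        · exact ⟨x1, hx1, fun h' => hαx h'.symm, h⟩
        · exact ⟨y1, hy1, fun h' => hαy h'.symm, h⟩
    obtain ⟨c, hcA, hcα, hcval⟩ := hfar
    -- assemble
    refine ⟨α, hαA, Fin.cons c a, ?_, ?_, ?_, ?_⟩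
    · intro i
      refine Fin.cases ?_ ?_ i
      · exact hcA
      · intro j; exact hBsub (haB j)
    · rw [Fin.cons_injective_iff]
      refine ⟨?_, hainj⟩
      rintro ⟨j, rfl⟩
      have := hsucc j
      rw [← hcval] at this
      omega
    · intro i
      refine Fin.cases ?_ ?_ i
      · exact fun h => hcα h.symm
      · exact fun j => hαa j
    · intro i j hij
      refine Fin.cases (motive := fun i => i ≠ j →
          (α - (Fin.cons c a : Fin (k+1) → ℚ_[p]) i).valuation ≠ (α - (Fin.cons c a : Fin (k+1) → ℚ_[p]) j).valuation) ?_ ?_ i hij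
      · refine Fin.cases (motive := fun j => (0 : Fin (k+1)) ≠ j →
            (α - (Fin.cons c a : Fin (k+1) → ℚ_[p]) 0).valuation ≠ (α - (Fin.cons c a : Fin (k+1) → ℚ_[p]) j).valuation) ?_ ?_ j
        · intro h; exact absurd rfl h
        · intro j' _
          simp only [Fin.cons_zero, Fin.cons_succ]
          have := hsucc j'
          rw [hcval]; omega
      · intro i'
        refine Fin.cases (motive := fun j => i'.succ ≠ j →
            (α - (Fin.cons c a : Fin (k+1) → ℚ_[p]) i'.succ).valuation ≠ (α - (Fin.cons c a : Fin (k+1) → ℚ_[p]) j).valuation) ?_ ?_ j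
        · intro _
          simp only [Fin.cons_zero, Fin.cons_succ]
          have := hsucc i'
          rw [hcval]; omega
        · intro j' hij'
          simp only [Fin.cons_succ]
          exact hval i' j' (fun h => hij' (by rw [h]))

theorem padic_distinct_valuations (p : ℕ) [Fact p.Prime] (k : ℕ) (hk : 1 ≤ k)
    (A : Finset ℚ_[p]) (hA : 2 * p ^ (k - 1) ≤ A.card) :
    ∃ α : ℚ_[p], ∃ a : Fin k → ℚ_[p], (∀ i, a i ∈ A) ∧ Function.Injective a ∧
      (∀ i, α ≠ a i) ∧
      ∀ i j : Fin k, i ≠ j → (α - a i).valuation ≠ (α - a j).valuation := by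
  obtain ⟨α, -, a, h1, h2, h3, h4⟩ := pdv_aux k hk A hA
  exact ⟨α, a, h1, h2, h3, h4⟩
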